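/- Let A be a commutative ring with identity, S ⊆ A a multiplicatively closed subset, and r ≥ 3. If GL_r(A[X]) = GL_r(A)·E_r(A[X]), then GL_r(S⁻¹A[X]) = GL_r(S⁻¹A)·E_r(S⁻¹A[X]). -/

import Mathlib

/-- The elementary matrix `e_{ij}(a) = 1 + a·E_{ij}`. -/
def elemMat {R : Type*} [Ring R] {n : ℕ} (i j : Fin n) (a : R) :
    Matrix (Fin n) (Fin n) R :=
  1 + Matrix.single i j a

/-- The elementary subgroup `Eₙ(R)` of `GLₙ(R)`. -/
def elementaryGroup (n : ℕ) (R : Type*) [Ring R] :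
    Subgroup (Matrix (Fin n) (Fin n) R)ˣ :=
  Subgroup.closure {g | ∃ i j a, i ≠ j ∧ g.val = elemMat i j a}

open Polynomial

set_option maxHeartbeats 1000000

section Dil

variable {R R' : Type*} [CommRing R] [CommRing R']

/-- The dilation homomorphism `X ↦ c·X` on polynomial rings. -/
noncomputable def dil (c : R) : R[X] →+* R[X] :=
  eval₂RingHom Polynomial.C (Polynomial.C c * X)

@[simp] lemma dil_C (c a : R) : dil c (Polynomial.C a) = Polynomial.C a := eval₂_C _ _

@[simp] lemma dil_X (c : R) : dil c X = Polynomial.C c * X := eval₂_X _ _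

lemma dil_coeff (c : R) (p : R[X]) (k : ℕ) : (dil c p).coeff k = c ^ k * p.coeff k := by
  induction p using Polynomial.induction_on' with
  | add p q hp hq => simp [hp, hq, mul_add]
  | monomial n a =>
      rw [← C_mul_X_pow_eq_monomial, _root_.map_mul, _root_.map_pow, dil_C, dil_X, mul_pow,
        ← C_pow, ← mul_assoc, ← _root_.map_mul, coeff_C_mul_X_pow, coeff_C_mul_X_pow]
      split_ifs with h
      · subst h; ring
      · ring

lemma dil_comp (c d : R) : (dil c).comp (dil d) = dil (d * c) := by
  apply Polynomial.ringHom_ext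
  · intro a; simp only [RingHom.comp_apply, dil_C]
  · simp only [RingHom.comp_apply, dil_X, _root_.map_mul, dil_C, C_mul]
    ring

lemma dil_one : dil (1 : R) = RingHom.id R[X] := by
  apply Polynomial.ringHom_ext
  · intro a; rw [dil_C, RingHom.id_apply]
  · rw [dil_X, _root_.map_one, one_mul, RingHom.id_apply]

lemma mapRingHom_comp_dil (f : R →+* R') (c : R) :
    (mapRingHom f).comp (dil c) = (dil (f c)).comp (mapRingHom f) := by
  apply Polynomial.ringHom_ext
  · intro a
    simp only [RingHom.comp_apply, dil_C, coe_mapRingHom, Polynomial.map_C]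
  · simp only [RingHom.comp_apply, dil_X, coe_mapRingHom, Polynomial.map_mul,
      Polynomial.map_C, Polynomial.map_X]

lemma dil_comp_C (c : R) : (dil c).comp (Polynomial.C) = Polynomial.C :=
  RingHom.ext fun a => dil_C c a

/-- Composition of matrix maps, applied form. -/
lemma mapMatrix_mapMatrix {T : Type*} [CommRing T] {n : ℕ} (f : R →+* R') (g : R' →+* T)
    (M : Matrix (Fin n) (Fin n) R) :
    g.mapMatrix (f.mapMatrix M) = (g.comp f).mapMatrix M := by
  simp only [RingHom.mapMatrix_apply, Matrix.map_map, RingHom.coe_comp]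

end Dil

section Elem

variable {R R' : Type*} [CommRing R] [CommRing R'] {n : ℕ}

lemma elemMat_map (f : R →+* R') (i j : Fin n) (a : R) :
    (elemMat i j a).map f = elemMat i j (f a) := by
  ext p q
  simp [elemMat, Matrix.map_apply, Matrix.add_apply, Matrix.one_apply, Matrix.single,
    Matrix.of_apply, apply_ite f]

lemma elementaryGroup_map (f : R →+* R') {g : (Matrix (Fin n) (Fin n) R)ˣ}
    (hg : g ∈ elementaryGroup n R) :
    Units.map f.mapMatrix.toMonoidHom g ∈ elementaryGroup n R' := by
  induction hg using Subgroup.closure_induction with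
  | mem x hx =>
      obtain ⟨i, j, a, hij, hx⟩ := hx
      refine Subgroup.subset_closure ⟨i, j, f a, hij, ?_⟩
      show f.mapMatrix x.val = _
      rw [RingHom.mapMatrix_apply, hx, elemMat_map]
  | one => simpa using (elementaryGroup n R').one_mem
  | mul x y hx hy ihx ihy => rw [_root_.map_mul]; exact (elementaryGroup n R').mul_mem ihx ihy
  | inv x hx ihx => rw [_root_.map_inv]; exact (elementaryGroup n R').inv_mem ihx

end Elem

section Loc

variable {A : Type*} [CommRing A] (S : Submonoid A) {r : ℕ}

/-- A common denominator for all coefficients of all entries of a matrix of polynomials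
over a localization. -/
lemma exists_common_integer (P : Matrix (Fin r) (Fin r) (Polynomial (Localization S))) :
    ∃ u : S, ∀ i j k, IsLocalization.IsInteger A ((u : A) • (P i j).coeff k) := by
  classical
  set D := (Finset.univ.sup fun ij : Fin r × Fin r => (P ij.1 ij.2).natDegree) + 1 with hD
  obtain ⟨u, hu⟩ := IsLocalization.exist_integer_multiples S
    (Finset.univ ×ˢ Finset.range D)
    (fun x : (Fin r × Fin r) × ℕ => (P x.1.1 x.1.2).coeff x.2)
  refine ⟨u, fun i j k => ?_⟩
  by_cases hk : k < D
  · exact hu ((i, j), k) (by simp [Finset.mem_product, hk])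
  · have h1 : (P i j).natDegree < D :=
      Nat.lt_succ_of_le (Finset.le_sup (f := fun ij : Fin r × Fin r => (P ij.1 ij.2).natDegree)
        (Finset.mem_univ (i, j)))
    have : (P i j).coeff k = 0 :=
      coeff_eq_zero_of_natDegree_lt (lt_of_lt_of_le h1 (not_lt.mp hk))
    rw [this, smul_zero]
    exact IsLocalization.isInteger_zero

/-- A common annihilator for all coefficients of all entries of a matrix of polynomials
that dies in the localization. -/
lemma exists_common_ann (P : Matrix (Fin r) (Fin r) (Polynomial A))
    (h : ∀ i j k, algebraMap A (Localization S) ((P i j).coeff k) = 0) :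
    ∃ v : S, ∀ i j k, (v : A) * (P i j).coeff k = 0 := by
  classical
  set D := (Finset.univ.sup fun ij : Fin r × Fin r => (P ij.1 ij.2).natDegree) + 1 with hD
  have key : ∀ x : (Fin r × Fin r) × ℕ, ∃ m : S, (m : A) * (P x.1.1 x.1.2).coeff x.2 = 0 :=
    fun x => (IsLocalization.map_eq_zero_iff S (Localization S) _).mp (h x.1.1 x.1.2 x.2)
  choose m hm using key
  refine ⟨∏ x ∈ Finset.univ ×ˢ Finset.range D, m x, fun i j k => ?_⟩
  by_cases hk : k < D
  · have hmem : ((i, j), k) ∈ Finset.univ ×ˢ Finset.range D := by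
      simp [Finset.mem_product, hk]
    rw [Submonoid.coe_finset_prod, ← Finset.prod_erase_mul _ _ hmem, mul_assoc,
      hm ((i, j), k), mul_zero]
  · have h1 : (P i j).natDegree < D :=
      Nat.lt_succ_of_le (Finset.le_sup (f := fun ij : Fin r × Fin r => (P ij.1 ij.2).natDegree)
        (Finset.mem_univ (i, j)))
    have : (P i j).coeff k = 0 :=
      coeff_eq_zero_of_natDegree_lt (lt_of_lt_of_le h1 (not_lt.mp hk))
    rw [this, mul_zero]

/-- If all coefficients of `x` become integral after multiplying with `u`, and the constant
coefficient is already integral, then the dilation of `x` by `u` lifts to `A[X]`. -/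
lemma lift_of_dil (x : Polynomial (Localization S)) (u : A)
    (h0 : x.coeff 0 ∈ Set.range (algebraMap A (Localization S)))
    (h : ∀ k, IsLocalization.IsInteger A (u • x.coeff k)) :
    ∃ q : Polynomial A,
      q.map (algebraMap A (Localization S)) = dil (algebraMap A (Localization S) u) x := by
  rw [← Polynomial.mem_lifts, Polynomial.lifts_iff_coeff_lifts]
  intro n
  rw [dil_coeff]
  cases n with
  | zero => simpa using h0
  | succ m =>
      obtain ⟨b, hb⟩ := h (m + 1)
      refine ⟨u ^ m * b, ?_⟩
      rw [_root_.map_mul, _root_.map_pow, hb, Algebra.smul_def]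
      ring

end Loc

/-- **Vorst.** If `GL_r(A[X]) = GL_r(A)·E_r(A[X])` then the same decomposition holds
after localization: `GL_r(S⁻¹A[X]) = GL_r(S⁻¹A)·E_r(S⁻¹A[X])`. -/
theorem localization_of_GL_eq_GL_mul_elementary
    (A : Type*) [CommRing A] (S : Submonoid A) (r : ℕ) (hr : 3 ≤ r)
    (H : ∀ M : (Matrix (Fin r) (Fin r) (Polynomial A))ˣ,
      ∃ N : (Matrix (Fin r) (Fin r) A)ˣ,
        ∃ E ∈ elementaryGroup r (Polynomial A),
          M = Units.map ((Polynomial.C : A →+* Polynomial A).mapMatrix).toMonoidHom N * E) :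
    ∀ M : (Matrix (Fin r) (Fin r) (Polynomial (Localization S)))ˣ,
      ∃ N : (Matrix (Fin r) (Fin r) (Localization S))ˣ,
        ∃ E ∈ elementaryGroup r (Polynomial (Localization S)),
          M = Units.map ((Polynomial.C : Localization S →+* Polynomial (Localization S)).mapMatrix).toMonoidHom N * E := by
  classical
  intro M
  set L := Localization S with hL
  let φ : A →+* L := algebraMap A L
  let Φ : Polynomial A →+* Polynomial L := mapRingHom φ
  let CL : L →+* Polynomial L := Polynomial.C
  let CA : A →+* Polynomial A := Polynomial.C
  let ev : Polynomial L →+* L := constantCoeff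
  -- Step 1: reduce to a matrix which is `1` at `X = 0`.
  let N₁ : (Matrix (Fin r) (Fin r) L)ˣ := Units.map ev.mapMatrix.toMonoidHom M
  let M' : (Matrix (Fin r) (Fin r) (Polynomial L))ˣ :=
    (Units.map CL.mapMatrix.toMonoidHom N₁)⁻¹ * M
  have hevC : ev.comp CL = RingHom.id L := RingHom.ext fun a => by
    simp [ev, CL]
  have hkey : Units.map ev.mapMatrix.toMonoidHom M' = 1 := by
    have h1 : Units.map ev.mapMatrix.toMonoidHom (Units.map CL.mapMatrix.toMonoidHom N₁) = N₁ := by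
      apply Units.ext
      show ev.mapMatrix (CL.mapMatrix N₁.val) = N₁.val
      rw [mapMatrix_mapMatrix, hevC, RingHom.mapMatrix_id, RingHom.id_apply]
    show Units.map ev.mapMatrix.toMonoidHom ((Units.map CL.mapMatrix.toMonoidHom N₁)⁻¹ * M) = 1
    rw [_root_.map_mul, _root_.map_inv, h1]
    exact inv_mul_cancel N₁
  have hval0 : ∀ i j, (M'.val i j).coeff 0 = (1 : Matrix (Fin r) (Fin r) L) i j := by
    intro i j
    have h2 : ev.mapMatrix M'.val = 1 := congrArg Units.val hkey
    have := congrFun (congrFun (congrArg (fun m => (m : Matrix (Fin r) (Fin r) L)) h2) i) j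
    simpa [RingHom.mapMatrix_apply, Matrix.map_apply, ev] using this
  have hinv0 : ∀ i j, (M'.inv i j).coeff 0 = (1 : Matrix (Fin r) (Fin r) L) i j := by
    intro i j
    have h2 : (Units.map ev.mapMatrix.toMonoidHom M')⁻¹ = 1 := by rw [hkey]; simp
    have h3 : ev.mapMatrix M'.inv = 1 := congrArg Units.val h2
    have := congrFun (congrFun (congrArg (fun m => (m : Matrix (Fin r) (Fin r) L)) h3) i) j
    simpa [RingHom.mapMatrix_apply, Matrix.map_apply, ev] using this
  have hone_range : ∀ i j : Fin r, (1 : Matrix (Fin r) (Fin r) L) i j ∈ Set.range φ := by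
    intro i j
    rcases eq_or_ne i j with h | h
    · subst h; exact ⟨1, by simp [Matrix.one_apply]⟩
    · exact ⟨0, by simp [Matrix.one_apply, h]⟩
  have hone_map : ∀ i j : Fin r, φ ((1 : Matrix (Fin r) (Fin r) A) i j)
      = (1 : Matrix (Fin r) (Fin r) L) i j := by
    intro i j
    rcases eq_or_ne i j with h | h
    · subst h; simp [Matrix.one_apply]
    · simp [Matrix.one_apply, h]
  -- Step 2: clear denominators after dilation.
  obtain ⟨u, hu⟩ := exists_common_integer S M'.val
  obtain ⟨u', hu'⟩ := exists_common_integer S M'.inv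
  set u₀ : S := u * u' with hu₀
  set c : L := φ (u₀ : A) with hc
  have hintval : ∀ i j k, IsLocalization.IsInteger A ((u₀ : A) • (M'.val i j).coeff k) := by
    intro i j k
    have heq : (u₀ : A) • (M'.val i j).coeff k = (u' : A) • ((u : A) • (M'.val i j).coeff k) := by
      rw [smul_smul]
      congr 1
      rw [hu₀, Submonoid.coe_mul]; ring
    rw [heq]
    exact IsLocalization.isInteger_smul (hu i j k)
  have hintinv : ∀ i j k, IsLocalization.IsInteger A ((u₀ : A) • (M'.inv i j).coeff k) := by
    intro i j k
    have heq : (u₀ : A) • (M'.inv i j).coeff k = (u : A) • ((u' : A) • (M'.inv i j).coeff k) := by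
      rw [smul_smul]
      congr 1
      all_goals rw [hu₀, Submonoid.coe_mul]
    rw [heq]
    exact IsLocalization.isInteger_smul (hu' i j k)
  -- lifts of the dilated entries
  have hP : ∀ i j, ∃ q : Polynomial A, q.map φ = dil c (M'.val i j) := fun i j =>
    lift_of_dil S _ _ (hval0 i j ▸ hone_range i j) (hintval i j)
  have hQ : ∀ i j, ∃ q : Polynomial A, q.map φ = dil c (M'.inv i j) := fun i j =>
    lift_of_dil S _ _ (hinv0 i j ▸ hone_range i j) (hintinv i j)
  choose P hPs using hP
  choose Q hQs using hQ
  -- adjust the constant coefficients to be exactly those of the identity matrix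
  let PM : Matrix (Fin r) (Fin r) (Polynomial A) := Matrix.of fun i j =>
    P i j + Polynomial.C ((1 : Matrix (Fin r) (Fin r) A) i j - (P i j).coeff 0)
  let QM : Matrix (Fin r) (Fin r) (Polynomial A) := Matrix.of fun i j =>
    Q i j + Polynomial.C ((1 : Matrix (Fin r) (Fin r) A) i j - (Q i j).coeff 0)
  have hφP0 : ∀ i j, φ ((P i j).coeff 0) = (1 : Matrix (Fin r) (Fin r) L) i j := by
    intro i j
    have h5 : ((P i j).map φ).coeff 0 = (dil c (M'.val i j)).coeff 0 := by rw [hPs]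
    rw [coeff_map, dil_coeff, pow_zero, one_mul, hval0 i j] at h5
    exact h5
  have hφQ0 : ∀ i j, φ ((Q i j).coeff 0) = (1 : Matrix (Fin r) (Fin r) L) i j := by
    intro i j
    have h5 : ((Q i j).map φ).coeff 0 = (dil c (M'.inv i j)).coeff 0 := by rw [hQs]
    rw [coeff_map, dil_coeff, pow_zero, one_mul, hinv0 i j] at h5
    exact h5
  have hPM : ∀ i j, (PM i j).map φ = dil c (M'.val i j) := by
    intro i j
    show (P i j + Polynomial.C _).map φ = _
    rw [Polynomial.map_add, Polynomial.map_C, map_sub, hφP0, hone_map, sub_self, map_zero,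
      add_zero, hPs]
  have hQM : ∀ i j, (QM i j).map φ = dil c (M'.inv i j) := by
    intro i j
    show (Q i j + Polynomial.C _).map φ = _
    rw [Polynomial.map_add, Polynomial.map_C, map_sub, hφQ0, hone_map, sub_self, map_zero,
      add_zero, hQs]
  have hPM0 : ∀ i j, (PM i j).coeff 0 = (1 : Matrix (Fin r) (Fin r) A) i j := by
    intro i j
    show (P i j + Polynomial.C _).coeff 0 = _
    rw [coeff_add, coeff_C_zero]
    ring
  have hQM0 : ∀ i j, (QM i j).coeff 0 = (1 : Matrix (Fin r) (Fin r) A) i j := by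
    intro i j
    show (Q i j + Polynomial.C _).coeff 0 = _
    rw [coeff_add, coeff_C_zero]
    ring
  have hΦPM : Φ.mapMatrix PM = (dil c).mapMatrix M'.val := by
    apply Matrix.ext
    intro i j
    rw [RingHom.mapMatrix_apply, RingHom.mapMatrix_apply, Matrix.map_apply, Matrix.map_apply]
    exact hPM i j
  have hΦQM : Φ.mapMatrix QM = (dil c).mapMatrix M'.inv := by
    apply Matrix.ext
    intro i j
    rw [RingHom.mapMatrix_apply, RingHom.mapMatrix_apply, Matrix.map_apply, Matrix.map_apply]
    exact hQM i j
  -- the defects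
  set Dm : Matrix (Fin r) (Fin r) (Polynomial A) := PM * QM - 1 with hDm
  set Dm' : Matrix (Fin r) (Fin r) (Polynomial A) := QM * PM - 1 with hDm'
  have hMval_inv : M'.val * M'.inv = 1 := M'.val_inv
  have hMinv_val : M'.inv * M'.val = 1 := M'.inv_val
  have hΦD : Φ.mapMatrix Dm = 0 := by
    rw [hDm, _root_.map_sub, _root_.map_mul, _root_.map_one, hΦPM, hΦQM, ← _root_.map_mul,
      hMval_inv, _root_.map_one, sub_self]
  have hΦD' : Φ.mapMatrix Dm' = 0 := by
    rw [hDm', _root_.map_sub, _root_.map_mul, _root_.map_one, hΦQM, hΦPM, ← _root_.map_mul,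
      hMinv_val, _root_.map_one, sub_self]
  have hDcoeff : ∀ i j k, φ ((Dm i j).coeff k) = 0 := by
    intro i j k
    have h6 : (Dm i j).map φ = 0 := by
      have h := congrFun (congrFun hΦD i) j
      rw [RingHom.mapMatrix_apply, Matrix.map_apply, Matrix.zero_apply] at h
      exact h
    have h7 := congrArg (fun p => Polynomial.coeff p k) h6
    simp only [coeff_map, coeff_zero] at h7
    exact h7
  have hDcoeff' : ∀ i j k, φ ((Dm' i j).coeff k) = 0 := by
    intro i j k
    have h6 : (Dm' i j).map φ = 0 := by
      have h := congrFun (congrFun hΦD' i) j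
      rw [RingHom.mapMatrix_apply, Matrix.map_apply, Matrix.zero_apply] at h
      exact h
    have h7 := congrArg (fun p => Polynomial.coeff p k) h6
    simp only [coeff_map, coeff_zero] at h7
    exact h7
  obtain ⟨v, hv⟩ := exists_common_ann S Dm hDcoeff
  obtain ⟨v', hv'⟩ := exists_common_ann S Dm' hDcoeff'
  set v₀ : S := v * v' with hv₀
  have hvD : ∀ i j k, (v₀ : A) * (Dm i j).coeff k = 0 := by
    intro i j k
    have heq : (v₀ : A) * (Dm i j).coeff k = (v' : A) * ((v : A) * (Dm i j).coeff k) := by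
      rw [hv₀, Submonoid.coe_mul]; ring
    rw [heq, hv, mul_zero]
  have hvD' : ∀ i j k, (v₀ : A) * (Dm' i j).coeff k = 0 := by
    intro i j k
    have heq : (v₀ : A) * (Dm' i j).coeff k = (v : A) * ((v' : A) * (Dm' i j).coeff k) := by
      rw [hv₀, Submonoid.coe_mul]; ring
    rw [heq, hv', mul_zero]
  -- constant coefficients of the defects vanish
  have honeP : ∀ i j : Fin r, ((1 : Matrix (Fin r) (Fin r) (Polynomial A)) i j).coeff 0
      = (1 : Matrix (Fin r) (Fin r) A) i j := by
    intro i j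
    rcases eq_or_ne i j with h | h
    · subst h; simp [Matrix.one_apply]
    · simp [Matrix.one_apply, h]
  have hD0 : ∀ i j, (Dm i j).coeff 0 = 0 := by
    intro i j
    have h7 : (Dm i j).coeff 0
        = ((PM * QM) i j).coeff 0 - ((1 : Matrix (Fin r) (Fin r) (Polynomial A)) i j).coeff 0 := by
      rw [hDm, Matrix.sub_apply, coeff_sub]
    rw [h7, honeP]
    have h8 : ((PM * QM) i j).coeff 0 = ∑ l, (PM i l).coeff 0 * (QM l j).coeff 0 := by
      rw [Matrix.mul_apply, finset_sum_coeff]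
      exact Finset.sum_congr rfl fun l _ => mul_coeff_zero _ _
    rw [h8]
    have h9 : ∑ l, (PM i l).coeff 0 * (QM l j).coeff 0
        = ∑ l, (1 : Matrix (Fin r) (Fin r) A) i l * (1 : Matrix (Fin r) (Fin r) A) l j :=
      Finset.sum_congr rfl fun l _ => by rw [hPM0, hQM0]
    rw [h9, ← Matrix.mul_apply, one_mul, sub_self]
  have hD0' : ∀ i j, (Dm' i j).coeff 0 = 0 := by
    intro i j
    have h7 : (Dm' i j).coeff 0
        = ((QM * PM) i j).coeff 0 - ((1 : Matrix (Fin r) (Fin r) (Polynomial A)) i j).coeff 0 := by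
      rw [hDm', Matrix.sub_apply, coeff_sub]
    rw [h7, honeP]
    have h8 : ((QM * PM) i j).coeff 0 = ∑ l, (QM i l).coeff 0 * (PM l j).coeff 0 := by
      rw [Matrix.mul_apply, finset_sum_coeff]
      exact Finset.sum_congr rfl fun l _ => mul_coeff_zero _ _
    rw [h8]
    have h9 : ∑ l, (QM i l).coeff 0 * (PM l j).coeff 0
        = ∑ l, (1 : Matrix (Fin r) (Fin r) A) i l * (1 : Matrix (Fin r) (Fin r) A) l j :=
      Finset.sum_congr rfl fun l _ => by rw [hQM0, hPM0]
    rw [h9, ← Matrix.mul_apply, one_mul, sub_self]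
  -- dilate by v₀ over A to kill the defects
  have hdilD : (dil (v₀ : A)).mapMatrix Dm = 0 := by
    apply Matrix.ext
    intro i j
    rw [RingHom.mapMatrix_apply, Matrix.map_apply, Matrix.zero_apply]
    apply Polynomial.ext
    intro k
    rw [dil_coeff, coeff_zero]
    cases k with
    | zero => rw [pow_zero, one_mul, hD0]
    | succ m => rw [pow_succ, mul_assoc, hvD, mul_zero]
  have hdilD' : (dil (v₀ : A)).mapMatrix Dm' = 0 := by
    apply Matrix.ext
    intro i j
    rw [RingHom.mapMatrix_apply, Matrix.map_apply, Matrix.zero_apply]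
    apply Polynomial.ext
    intro k
    rw [dil_coeff, coeff_zero]
    cases k with
    | zero => rw [pow_zero, one_mul, hD0']
    | succ m => rw [pow_succ, mul_assoc, hvD', mul_zero]
  set PM₂ : Matrix (Fin r) (Fin r) (Polynomial A) := (dil (v₀ : A)).mapMatrix PM with hPM₂
  set QM₂ : Matrix (Fin r) (Fin r) (Polynomial A) := (dil (v₀ : A)).mapMatrix QM with hQM₂
  have hPQone : PM * QM = 1 + Dm := by rw [hDm]; abel
  have hQPone : QM * PM = 1 + Dm' := by rw [hDm']; abel
  have hPQ₂ : PM₂ * QM₂ = 1 := by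
    rw [hPM₂, hQM₂, ← _root_.map_mul, hPQone, _root_.map_add, _root_.map_one, hdilD, add_zero]
  have hQP₂ : QM₂ * PM₂ = 1 := by
    rw [hPM₂, hQM₂, ← _root_.map_mul, hQPone, _root_.map_add, _root_.map_one, hdilD', add_zero]
  let Nu : (Matrix (Fin r) (Fin r) (Polynomial A))ˣ := ⟨PM₂, QM₂, hPQ₂, hQP₂⟩
  -- the image of `Nu` in `GL_r(L[X])` is the dilation of `M'` by `w`
  set s₀ : S := u₀ * v₀ with hs₀
  set w : L := φ (s₀ : A) with hw
  have hcw : c * φ (v₀ : A) = w := by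
    rw [hc, hw, ← _root_.map_mul]
    congr 1
    all_goals rw [hs₀, Submonoid.coe_mul]
  have hΦPM₂ : Φ.mapMatrix PM₂ = (dil w).mapMatrix M'.val := by
    rw [hPM₂, mapMatrix_mapMatrix, mapRingHom_comp_dil, ← mapMatrix_mapMatrix, hΦPM,
      mapMatrix_mapMatrix, dil_comp, hcw]
  -- `w` is invertible in `L`
  obtain ⟨wu, hwu⟩ := IsLocalization.map_units (Localization S) s₀
  set wi : L := ((wu⁻¹ : Lˣ) : L) with hwi
  have hww : w * wi = 1 := by
    rw [hw, hwi, ← hwu]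
    exact Units.mul_inv wu
  -- apply the hypothesis to `Nu`
  obtain ⟨N₀, E, hE, hNu⟩ := H Nu
  -- push the decomposition to `L[X]` and undo the dilation
  set G : (Matrix (Fin r) (Fin r) (Polynomial A))ˣ →* (Matrix (Fin r) (Fin r) (Polynomial L))ˣ :=
    Units.map Φ.mapMatrix.toMonoidHom with hG
  set G' : (Matrix (Fin r) (Fin r) (Polynomial L))ˣ →* (Matrix (Fin r) (Fin r) (Polynomial L))ˣ :=
    Units.map ((dil wi).mapMatrix).toMonoidHom with hG'
  have hGNu : G' (G Nu) = M' := by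
    apply Units.ext
    show (dil wi).mapMatrix (Φ.mapMatrix Nu.val) = M'.val
    have h10 : Φ.mapMatrix Nu.val = (dil w).mapMatrix M'.val := hΦPM₂
    rw [h10, mapMatrix_mapMatrix, dil_comp, hww, dil_one, RingHom.mapMatrix_id, RingHom.id_apply]
  have hcomp2 : (((dil wi).comp Φ).comp CA) = CL.comp φ := by
    apply RingHom.ext
    intro a
    simp [Φ, CA, CL]
  have hconst : G' (G (Units.map CA.mapMatrix.toMonoidHom N₀))
      = Units.map CL.mapMatrix.toMonoidHom (Units.map φ.mapMatrix.toMonoidHom N₀) := by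
    apply Units.ext
    show (dil wi).mapMatrix (Φ.mapMatrix (CA.mapMatrix N₀.val))
      = CL.mapMatrix (φ.mapMatrix N₀.val)
    rw [mapMatrix_mapMatrix, mapMatrix_mapMatrix, mapMatrix_mapMatrix, RingHom.comp_assoc,
      ← RingHom.comp_assoc, hcomp2]
  -- assemble
  refine ⟨N₁ * Units.map φ.mapMatrix.toMonoidHom N₀,
    G' (G E), elementaryGroup_map _ (elementaryGroup_map _ hE), ?_⟩
  have hM'dec : M' = Units.map CL.mapMatrix.toMonoidHom (Units.map φ.mapMatrix.toMonoidHom N₀)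
      * G' (G E) := by
    rw [← hconst, ← _root_.map_mul, ← _root_.map_mul, ← hNu, hGNu]
  calc M = Units.map CL.mapMatrix.toMonoidHom N₁ * M' := by
        rw [mul_inv_cancel_left]
    _ = Units.map CL.mapMatrix.toMonoidHom N₁
          * (Units.map CL.mapMatrix.toMonoidHom (Units.map φ.mapMatrix.toMonoidHom N₀)
            * G' (G E)) := by rw [← hM'dec]
    _ = Units.map CL.mapMatrix.toMonoidHom (N₁ * Units.map φ.mapMatrix.toMonoidHom N₀)
          * G' (G E) := by rw [_root_.map_mul, mul_assoc]
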